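/- Let Γ be a weighted directed graph on a finite nonempty vertex set V with nonnegative weights (w_{ij} ≥ 0 for all i,j), and let k be a positive integer. The following are equivalent: (i) the algebraic multiplicity of the eigenvalue 1 of P := I − Δ equals k; (ii) the algebraic multiplicity of the eigenvalue 0 of the normalized Laplace operator Δ equals k; (iii) Γ has exactly k isolated strongly connected components; (iv) the minimum cardinality of a set R ⊆ V such that every vertex of V is reachable from some vertex of R along directed edges (i.e., the minimum number of directed trees needed to span Γ) equals k. -/

import Mathlib

/-- In-degree of vertex `i`: `d_i^in = ∑_j w_{ij}`. -/
noncomputable def din {V : Type*} [Fintype V] (w : V → V → ℝ) (i : V) : ℝ :=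
  ∑ j, w i j

/-- The normalized Laplace operator of a weighted directed graph, as a complex matrix. -/
noncomputable def lap {V : Type*} [Fintype V] [DecidableEq V] (w : V → V → ℝ) :
    Matrix V V ℂ :=
  Matrix.of fun i j =>
    if din w i = 0 then 0
    else (if i = j then 1 else 0) - ((w i j / din w i : ℝ) : ℂ)

/-- Vertex `j` reaches vertex `i` along directed edges. -/
def reaches {V : Type*} (w : V → V → ℝ) (j i : V) : Prop :=
  Relation.ReflTransGen (fun a b => w b a ≠ 0) j i

/-- `S` is a strongly connected component of `Γ`. -/
def IsSCC {V : Type*} (w : V → V → ℝ) (S : Finset V) : Prop :=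
  S.Nonempty ∧ ∀ i ∈ S, ∀ j, j ∈ S ↔ (reaches w i j ∧ reaches w j i)

/-- The induced subgraph on `S` is isolated. -/
def IsolatedF {V : Type*} (w : V → V → ℝ) (S : Finset V) : Prop :=
  ∀ i ∈ S, ∀ j ∉ S, w i j = 0

set_option linter.unusedSectionVars false

section Comb

variable {V : Type*} [Fintype V] [DecidableEq V]

lemma reaches_refl (w : V → V → ℝ) (i : V) : reaches w i i := Relation.ReflTransGen.refl

lemma reaches_trans {w : V → V → ℝ} {a b c : V} (h1 : reaches w a b) (h2 : reaches w b c) :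
    reaches w a c := Relation.ReflTransGen.trans h1 h2

lemma reaches_single {w : V → V → ℝ} {a b : V} (h : w b a ≠ 0) : reaches w a b :=
  Relation.ReflTransGen.single h

/-- if `D` is closed under taking in-neighbours, it is closed under reverse reachability. -/
lemma mem_of_reaches_closed {w : V → V → ℝ} {D : Set V}
    (hD : ∀ b ∈ D, ∀ a, w b a ≠ 0 → a ∈ D) {a b : V} (h : reaches w a b) (hb : b ∈ D) :
    a ∈ D := by
  induction h with
  | refl => exact hb
  | tail hab hbc ih => exact ih (hD _ hb _ hbc)

/-- The strongly connected component of a vertex. -/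
noncomputable def sccOf (w : V → V → ℝ) (i : V) : Finset V :=
  @Finset.filter V (fun j => reaches w i j ∧ reaches w j i) (Classical.decPred _) Finset.univ

lemma mem_sccOf {w : V → V → ℝ} {i j : V} :
    j ∈ sccOf w i ↔ reaches w i j ∧ reaches w j i := by
  simp [sccOf]

lemma isSCC_sccOf (w : V → V → ℝ) (i : V) : IsSCC w (sccOf w i) := by
  refine ⟨⟨i, mem_sccOf.2 ⟨reaches_refl w i, reaches_refl w i⟩⟩, ?_⟩
  intro a ha j
  rw [mem_sccOf] at ha ⊢
  constructor
  · rintro ⟨hj1, hj2⟩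
    exact ⟨reaches_trans ha.2 hj1, reaches_trans hj2 ha.1⟩
  · rintro ⟨h1, h2⟩
    exact ⟨reaches_trans ha.1 h1, reaches_trans h2 ha.2⟩

lemma scc_unique {w : V → V → ℝ} {S T : Finset V} (hS : IsSCC w S) (hT : IsSCC w T)
    {x : V} (hxS : x ∈ S) (hxT : x ∈ T) : S = T := by
  ext j
  rw [hS.2 x hxS j, hT.2 x hxT j]

lemma isolated_closed {w : V → V → ℝ} {S : Finset V} (hI : IsolatedF w S) {a b : V}
    (h : reaches w a b) (hb : b ∈ S) : a ∈ S := by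
  refine mem_of_reaches_closed (D := (S : Set V)) ?_ h hb
  intro b hbS a hw
  by_contra haS
  exact hw (hI b hbS a haS)

/-- Every vertex is reachable from some isolated strongly connected component. -/
lemma exists_iso_scc_reaches (w : V → V → ℝ) (i : V) :
    ∃ S : Finset V, IsSCC w S ∧ IsolatedF w S ∧ ∃ rt ∈ S, reaches w rt i := by
  classical
  set B : Finset V := Finset.univ.filter (fun j => reaches w j i) with hB
  have hiB : i ∈ B := by simp [hB, reaches_refl]
  set g : V → ℕ := fun j => (Finset.univ.filter (fun z => reaches w z j)).card with hg
  obtain ⟨j₀, hj₀B, hj₀min⟩ := B.exists_min_image g ⟨i, hiB⟩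
  have hj₀i : reaches w j₀ i := by simpa [hB] using hj₀B
  refine ⟨sccOf w j₀, isSCC_sccOf w j₀, ?_, j₀,
    mem_sccOf.2 ⟨reaches_refl w j₀, reaches_refl w j₀⟩, hj₀i⟩
  intro a ha y hy
  by_contra hw
  rw [mem_sccOf] at ha
  have hya : reaches w y a := reaches_single hw
  have hyj₀ : reaches w y j₀ := reaches_trans hya ha.2
  have hyB : y ∈ B := by simp [hB, reaches_trans hyj₀ hj₀i]
  have hsub : (Finset.univ.filter (fun z => reaches w z y)) ⊂
      (Finset.univ.filter (fun z => reaches w z j₀)) := by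
    constructor
    · intro z hz
      simp only [Finset.mem_filter, Finset.mem_univ, true_and] at hz ⊢
      exact reaches_trans hz hyj₀
    · intro hcon
      have : j₀ ∈ (Finset.univ.filter (fun z => reaches w z j₀)) := by
        simp [reaches_refl]
      have hj₀y : reaches w j₀ y := by simpa using hcon this
      exact hy (mem_sccOf.2 ⟨hj₀y, hyj₀⟩)
  have := Finset.card_lt_card hsub
  have := hj₀min y hyB
  simp only [hg] at this
  omega

end Comb
section Anal

variable {V : Type*} [Fintype V] [DecidableEq V]

/-- The stochastic completion of the transition matrix. -/
noncomputable def pmat (w : V → V → ℝ) (i j : V) : ℝ :=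
  if din w i = 0 then (if i = j then 1 else 0) else w i j / din w i

lemma din_nonneg (w : V → V → ℝ) (hpos : ∀ i j, 0 ≤ w i j) (i : V) : 0 ≤ din w i :=
  Finset.sum_nonneg fun j _ => hpos i j

lemma pmat_nonneg (w : V → V → ℝ) (hpos : ∀ i j, 0 ≤ w i j) (i j : V) : 0 ≤ pmat w i j := by
  unfold pmat
  split_ifs with h h'
  · norm_num
  · norm_num
  · exact div_nonneg (hpos i j) (din_nonneg w hpos i)

lemma pmat_sum (w : V → V → ℝ) (i : V) : ∑ j, pmat w i j = 1 := by
  unfold pmat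
  split_ifs with h
  · simp
  · rw [← Finset.sum_div, ← din, div_self h]

lemma din_eq_zero_of (w : V → V → ℝ) (hpos : ∀ i j, 0 ≤ w i j) {i : V} (h : din w i = 0) :
    ∀ j, w i j = 0 := by
  intro j
  have := (Finset.sum_eq_zero_iff_of_nonneg (fun j _ => hpos i j)).1 h
  exact this j (Finset.mem_univ j)

lemma lap_mulVec (w : V → V → ℝ) (v : V → ℂ) (i : V) :
    (lap w).mulVec v i = v i - ∑ j, (pmat w i j : ℂ) * v j := by
  unfold Matrix.mulVec dotProduct lap pmat
  by_cases h : din w i = 0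
  · simp only [h, if_true, Matrix.of_apply, zero_mul, Finset.sum_const_zero]
    rw [Finset.sum_congr rfl (fun j (_ : j ∈ Finset.univ) => by
      rw [show (((if i = j then (1:ℝ) else 0) : ℝ) : ℂ) = if i = j then (1:ℂ) else 0 by
        split_ifs <;> norm_num, ite_mul, one_mul, zero_mul])]
    simp [Finset.sum_ite_eq]
  · simp only [h, if_false, Matrix.of_apply, sub_mul, Finset.sum_sub_distrib]
    rw [Finset.sum_congr rfl (fun j _ => by rw [ite_mul, one_mul, zero_mul])]
    simp [Finset.sum_ite_eq]

/-- Strict convexity equality case, complex version. -/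
lemma convex_eq {a : V → ℝ} (ha : ∀ j, 0 ≤ a j) (hsum : ∑ j, a j = 1)
    {z : V → ℂ} {c : ℂ} (hc : c = ∑ j, (a j : ℂ) * z j)
    (hz : ∀ j, (norm : ℂ → ℝ) (z j) ≤ (norm : ℂ → ℝ) c)
    {j₀ : V} (hj : a j₀ ≠ 0) : z j₀ = c := by
  by_cases hc0 : c = 0
  · have h0 : (norm : ℂ → ℝ) (z j₀) = 0 :=
      le_antisymm (by simpa [hc0] using hz j₀) (norm_nonneg _)
    rw [norm_eq_zero.1 h0, hc0]
  set M : ℝ := (norm : ℂ → ℝ) c with hM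
  have hM0 : 0 < M := norm_pos_iff.mpr hc0
  set r : V → ℝ := fun j => a j * (M ^ 2 - ((starRingEnd ℂ) c * z j).re) with hr
  have habs' : ∀ j, (norm : ℂ → ℝ) ((starRingEnd ℂ) c * z j) ≤ M ^ 2 := by
    intro j
    rw [norm_mul]
    simp only [Complex.norm_conj]
    calc (norm : ℂ → ℝ) c * (norm : ℂ → ℝ) (z j) ≤ M * M :=
      mul_le_mul_of_nonneg_left (hz j) (norm_nonneg c)
    _ = M ^ 2 := by ring
  have hrnn : ∀ j ∈ Finset.univ, 0 ≤ r j := by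
    intro j _
    apply mul_nonneg (ha j)
    have h1 : ((starRingEnd ℂ) c * z j).re ≤ (norm : ℂ → ℝ) ((starRingEnd ℂ) c * z j) :=
      Complex.re_le_norm _
    linarith [habs' j]
  have hccre : ((starRingEnd ℂ) c * c).re = M ^ 2 := by
    have : (starRingEnd ℂ) c * c = (Complex.normSq c : ℂ) := by
      rw [mul_comm, Complex.mul_conj]
    rw [this, Complex.ofReal_re, ← Complex.sq_norm]
  have hrsum : ∑ j, r j = 0 := by
    have key : ∑ j, a j * ((starRingEnd ℂ) c * z j).re = M ^ 2 := by
      have h2 : ∑ j, a j * ((starRingEnd ℂ) c * z j).re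
          = ((starRingEnd ℂ) c * ∑ j, (a j : ℂ) * z j).re := by
        rw [Finset.mul_sum, Complex.re_sum]
        refine Finset.sum_congr rfl fun j _ => ?_
        rw [show (starRingEnd ℂ) c * ((a j : ℂ) * z j)
            = (a j : ℂ) * ((starRingEnd ℂ) c * z j) by ring]
        rw [Complex.re_ofReal_mul]
      rw [h2, ← hc, hccre]
    simp only [hr, mul_sub, Finset.sum_sub_distrib, ← Finset.sum_mul, hsum, one_mul, key]
    ring
  have hr0 : r j₀ = 0 :=
    (Finset.sum_eq_zero_iff_of_nonneg hrnn).1 hrsum j₀ (Finset.mem_univ j₀)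
  have hre : ((starRingEnd ℂ) c * z j₀).re = M ^ 2 := by
    rcases mul_eq_zero.1 hr0 with h | h
    · exact absurd h hj
    · linarith [sub_eq_zero.1 h]
  set ζ : ℂ := (starRingEnd ℂ) c * z j₀ with hζ
  have him : ζ.im = 0 := by
    have h1 : ζ.re ^ 2 + ζ.im ^ 2 = ((norm : ℂ → ℝ) ζ) ^ 2 := by
      rw [Complex.sq_norm, Complex.normSq_apply]; ring
    nlinarith [hre, habs' j₀, sq_nonneg ζ.im, norm_nonneg ζ]
  have hζeq : ζ = ((M : ℂ)) ^ 2 := by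
    apply Complex.ext
    · rw [hre]; simp [← Complex.ofReal_pow]
    · rw [him]; simp [← Complex.ofReal_pow]
  have hcc : (starRingEnd ℂ) c * c = ((M : ℂ)) ^ 2 := by
    apply Complex.ext
    · rw [hccre]; simp [← Complex.ofReal_pow]
    · have : (starRingEnd ℂ) c * c = (Complex.normSq c : ℂ) := by
        rw [mul_comm, Complex.mul_conj]
      rw [this]; simp [← Complex.ofReal_pow]
  have hfin : (starRingEnd ℂ) c * z j₀ = (starRingEnd ℂ) c * c := by rw [← hζ, hζeq, hcc]
  exact mul_left_cancel₀ (by simpa using hc0) hfin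

end Anal
section MP

variable {V : Type*} [Fintype V] [DecidableEq V] [Nonempty V]

open Finset

/-- A single vertex with zero in-degree is an isolated SCC. -/
lemma singleton_iso {w : V → V → ℝ} (hpos : ∀ i j, 0 ≤ w i j) {i : V} (h : din w i = 0) :
    IsSCC w {i} ∧ IsolatedF w {i} := by
  have hz : ∀ j, w i j = 0 := din_eq_zero_of w hpos h
  have hreach : ∀ j, reaches w j i → j = i := by
    intro j hj
    induction hj using Relation.ReflTransGen.head_induction_on with
    | refl => rfl
    | head hab _ ih =>
        rename_i a c _
        rw [ih] at hab
        exact absurd (hz _) hab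
  constructor
  · refine ⟨⟨i, Finset.mem_singleton_self i⟩, ?_⟩
    intro a ha j
    rw [Finset.mem_singleton] at ha
    subst ha
    rw [Finset.mem_singleton]
    constructor
    · rintro rfl; exact ⟨Relation.ReflTransGen.refl, Relation.ReflTransGen.refl⟩
    · rintro ⟨h1, h2⟩; exact hreach j h2
  · intro a ha j _
    rw [Finset.mem_singleton] at ha
    subst ha
    exact hz j

/-- Maximum principle: a vector harmonic wherever it is nonzero, vanishing somewhere on each
isolated SCC, is zero. -/
lemma max_principle (w : V → V → ℝ) (hpos : ∀ i j, 0 ≤ w i j) (v : V → ℂ)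
    (h1 : ∀ i, v i ≠ 0 → (lap w).mulVec v i = 0)
    (h2 : ∀ S : Finset V, IsSCC w S → IsolatedF w S → ∃ s ∈ S, v s = 0) :
    v = 0 := by
  by_contra hv
  obtain ⟨i₁, hi₁⟩ : ∃ i, v i ≠ 0 := by
    by_contra hno
    push_neg at hno
    exact hv (funext fun i => hno i)
  obtain ⟨i₀, -, hmax⟩ := Finset.exists_max_image (Finset.univ : Finset V)
    (fun i => (norm : ℂ → ℝ) (v i)) ⟨i₁, Finset.mem_univ i₁⟩
  have hM0 : v i₀ ≠ 0 := by
    intro h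
    apply hi₁
    have := hmax i₁ (Finset.mem_univ i₁)
    rw [h] at this
    simpa using norm_eq_zero.1 (le_antisymm (by simpa using this) (norm_nonneg _))
  set D : Set V := {j | v j = v i₀} with hD
  have hDclosed : ∀ b ∈ D, ∀ a, w b a ≠ 0 → a ∈ D := by
    intro b hb a hw
    have hvb : v b = v i₀ := hb
    have hvbne : v b ≠ 0 := by rw [hvb]; exact hM0
    have hd : din w b ≠ 0 := by
      intro hd0
      exact hw (din_eq_zero_of w hpos hd0 a)
    have hharm := h1 b hvbne
    rw [lap_mulVec, sub_eq_zero] at hharm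
    have hsum1 : ∑ j, pmat w b j = 1 := pmat_sum w b
    have hzb : v a = v b := by
      refine convex_eq (fun j => pmat_nonneg w hpos b j) hsum1 hharm ?_ ?_
      · intro j
        rw [hvb]
        exact hmax j (Finset.mem_univ j)
      · unfold pmat
        rw [if_neg hd]
        exact div_ne_zero hw hd
    rw [hD]; show v a = v i₀
    rw [hzb, hvb]
  obtain ⟨S, hS, hIso, rt, hrt, hreach⟩ := exists_iso_scc_reaches w i₀
  have hrtD : rt ∈ D := mem_of_reaches_closed hDclosed hreach rfl
  obtain ⟨s, hsS, hvs⟩ := h2 S hS hIso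
  have hsrt : reaches w s rt := ((hS.2 rt hrt s).1 hsS).2
  have hsD : s ∈ D := mem_of_reaches_closed hDclosed (reaches_trans hsrt hreach) rfl
  have : v s = v i₀ := hsD
  rw [hvs] at this
  exact hM0 this.symm

/-- The sup-norm bound for the stochastic matrix. -/
lemma pmat_bound (w : V → V → ℝ) (hpos : ∀ i j, 0 ≤ w i j) (x : V → ℂ) (C : ℝ)
    (hC : ∀ j, (norm : ℂ → ℝ) (x j) ≤ C) (i : V) :
    (norm : ℂ → ℝ) (∑ j, (pmat w i j : ℂ) * x j) ≤ C := by
  calc (norm : ℂ → ℝ) (∑ j, (pmat w i j : ℂ) * x j)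
      ≤ ∑ j, (norm : ℂ → ℝ) ((pmat w i j : ℂ) * x j) := by
        exact norm_sum_le _ _
    _ ≤ ∑ j, pmat w i j * C := by
        refine Finset.sum_le_sum fun j _ => ?_
        rw [norm_mul, Complex.norm_real, Real.norm_eq_abs, abs_of_nonneg (pmat_nonneg w hpos i j)]
        exact mul_le_mul_of_nonneg_left (hC j) (pmat_nonneg w hpos i j)
    _ = C := by rw [← Finset.sum_mul, pmat_sum w i, one_mul]

/-- Semisimplicity at `0`: `ker Δ² = ker Δ`. -/
lemma lap_ker_sq (w : V → V → ℝ) (hpos : ∀ i j, 0 ≤ w i j) (v : V → ℂ)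
    (h : (lap w).mulVec ((lap w).mulVec v) = 0) : (lap w).mulVec v = 0 := by
  set u := (lap w).mulVec v with hu
  have hPu : ∀ i, u i = ∑ j, (pmat w i j : ℂ) * u j := by
    intro i
    have h0 : (lap w).mulVec u i = 0 := by rw [h]; rfl
    rw [lap_mulVec, sub_eq_zero] at h0
    exact h0
  set C : ℝ := Finset.univ.sup' Finset.univ_nonempty (fun j => (norm : ℂ → ℝ) (v j)) with hCdef
  have hvC : ∀ j, (norm : ℂ → ℝ) (v j) ≤ C := fun j =>
    Finset.le_sup' (fun j => (norm : ℂ → ℝ) (v j)) (Finset.mem_univ j)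
  -- x m = v - m • u satisfies the same bound
  have key : ∀ m : ℕ, ∀ i, (norm : ℂ → ℝ) (v i - (m : ℂ) * u i) ≤ C := by
    intro m
    induction m with
    | zero => intro i; simpa using hvC i
    | succ m ih =>
        intro i
        have hvu : ∀ i, v i - ((m : ℂ) + 1) * u i
            = ∑ j, (pmat w i j : ℂ) * (v j - (m : ℂ) * u j) := by
          intro i
          have h1 : ∑ j, (pmat w i j : ℂ) * (v j - (m : ℂ) * u j)
              = (∑ j, (pmat w i j : ℂ) * v j) - (m : ℂ) * ∑ j, (pmat w i j : ℂ) * u j := by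
            rw [Finset.mul_sum, ← Finset.sum_sub_distrib]
            refine Finset.sum_congr rfl fun j _ => by ring
          rw [h1, ← hPu i]
          have h2 : ∑ j, (pmat w i j : ℂ) * v j = v i - u i := by
            have := lap_mulVec w v i
            rw [← hu] at this
            linear_combination this
          rw [h2]
          ring
        rw [show ((m + 1 : ℕ) : ℂ) = (m : ℂ) + 1 by push_cast; ring, hvu i]
        exact pmat_bound w hpos _ C ih i
  funext i
  show u i = 0
  by_contra hui
  obtain ⟨m, hm⟩ := exists_nat_gt ((C + (norm : ℂ → ℝ) (v i)) / (norm : ℂ → ℝ) (u i))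
  have habs : (norm : ℂ → ℝ) ((m : ℂ) * u i) ≤ C + (norm : ℂ → ℝ) (v i) := by
    calc (norm : ℂ → ℝ) ((m : ℂ) * u i)
        = (norm : ℂ → ℝ) ((v i - (m : ℂ) * u i) - v i) := by
          rw [show v i - (m : ℂ) * u i - v i = -((m : ℂ) * u i) by ring, norm_neg]
      _ ≤ (norm : ℂ → ℝ) (v i - (m : ℂ) * u i) + (norm : ℂ → ℝ) (v i) := norm_sub_le _ _
      _ ≤ C + (norm : ℂ → ℝ) (v i) := by gcongr; exact key m i
  have h1 : (norm : ℂ → ℝ) ((m : ℂ) * u i) = m * (norm : ℂ → ℝ) (u i) := by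
    rw [norm_mul, Complex.norm_natCast]
  have h2 : (0 : ℝ) < (norm : ℂ → ℝ) (u i) := norm_pos_iff.mpr hui
  rw [h1] at habs
  have := (div_lt_iff₀ h2).1 hm
  linarith

end MP
section Ker

variable {V : Type*} [Fintype V] [DecidableEq V] [Nonempty V]

open Module LinearMap

lemma finrank_ker_lap (w : V → V → ℝ) (hpos : ∀ i j, 0 ≤ w i j) :
    Module.finrank ℂ (LinearMap.ker (Matrix.mulVecLin (lap w)))
      = Nat.card {S : Finset V // IsSCC w S ∧ IsolatedF w S} := by
  classical
  haveI : Fintype {S : Finset V // IsSCC w S ∧ IsolatedF w S} := Fintype.ofFinite _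
  set ISO := {S : Finset V // IsSCC w S ∧ IsolatedF w S} with hISO
  set sfun : ISO → V := fun T => T.2.1.1.choose with hsfun
  have hsfun_mem : ∀ T : ISO, sfun T ∈ T.1 := fun T => T.2.1.1.choose_spec
  set ev : ↥(LinearMap.ker (Matrix.mulVecLin (lap w))) →ₗ[ℂ] (ISO → ℂ) :=
    LinearMap.pi (fun T => (LinearMap.proj (sfun T)).comp (Submodule.subtype _)) with hev
  have hev_apply : ∀ v (T : ISO), ev v T = (v : V → ℂ) (sfun T) := fun v T => rfl
  set U : Set V := {i | ∃ T : ISO, i ∈ T.1} with hU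
  -- injectivity
  have hinj : Function.Injective ev := by
    rw [← LinearMap.ker_eq_bot]
    rw [Submodule.eq_bot_iff]
    rintro ⟨v, hv⟩ hz
    rw [LinearMap.mem_ker] at hz
    have hv0 : v = 0 := by
      apply max_principle w hpos v
      · intro i _
        have : (lap w).mulVec v = 0 := by
          simpa [Matrix.mulVecLin_apply] using hv
        rw [this]; rfl
      · intro S hS hIso
        refine ⟨sfun ⟨S, hS, hIso⟩, hsfun_mem ⟨S, hS, hIso⟩, ?_⟩
        have := congrFun hz (⟨S, hS, hIso⟩ : ISO)
        simpa [hev_apply] using this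
    simp only [Submodule.mk_eq_zero]
    exact hv0
  -- surjectivity
  have hsurj : Function.Surjective ev := by
    intro c
    set g : V → ℂ := fun i => if h : ∃ T : ISO, i ∈ T.1 then c h.choose else 0 with hg
    have hgmem : ∀ (T : ISO), ∀ j ∈ T.1, g j = c T := by
      intro T j hj
      have hex : ∃ T' : ISO, j ∈ T'.1 := ⟨T, hj⟩
      have : hex.choose = T := by
        apply Subtype.ext
        exact scc_unique hex.choose.2.1 T.2.1 hex.choose_spec hj
      rw [hg]
      simp only [dif_pos hex, this]
    set L : (V → ℂ) →ₗ[ℂ] (V → ℂ) :=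
      { toFun := fun v i => if i ∈ U then v i else (lap w).mulVec v i
        map_add' := by
          intro x y
          funext i
          by_cases h : i ∈ U <;> simp [h, Matrix.mulVec_add]
        map_smul' := by
          intro a x
          funext i
          by_cases h : i ∈ U <;> simp [h, Matrix.mulVec_smul] } with hL
    have hLapply : ∀ v i, L v i = if i ∈ U then v i else (lap w).mulVec v i := fun v i => rfl
    have hLinj : Function.Injective L := by
      rw [← LinearMap.ker_eq_bot, Submodule.eq_bot_iff]
      intro v hv
      rw [LinearMap.mem_ker] at hv
      apply max_principle w hpos v
      · intro i hvi
        have hiU : i ∉ U := by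
          intro hiU
          have := congrFun hv i
          rw [hLapply, if_pos hiU] at this
          exact hvi this
        have := congrFun hv i
        rwa [hLapply, if_neg hiU] at this
      · intro S hS hIso
        have hmem : sfun ⟨S, hS, hIso⟩ ∈ U := ⟨⟨S, hS, hIso⟩, hsfun_mem _⟩
        have := congrFun hv (sfun ⟨S, hS, hIso⟩)
        rw [hLapply, if_pos hmem] at this
        exact ⟨sfun ⟨S, hS, hIso⟩, hsfun_mem _, this⟩
    have hLsurj : Function.Surjective L := LinearMap.injective_iff_surjective.1 hLinj
    obtain ⟨v, hvL⟩ := hLsurj g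
    have hvU : ∀ i ∈ U, v i = g i := by
      intro i hi
      have := congrFun hvL i
      rwa [hLapply, if_pos hi] at this
    have hvN : ∀ i, i ∉ U → (lap w).mulVec v i = 0 := by
      intro i hi
      have := congrFun hvL i
      rw [hLapply, if_neg hi] at this
      rw [this, hg]
      exact dif_neg hi
    have hker : (lap w).mulVec v = 0 := by
      funext i
      by_cases hi : i ∈ U
      · obtain ⟨T, hiT⟩ := hi
        by_cases hd : din w i = 0
        · -- row of `lap` is zero
          show ∑ j, lap w i j * v j = 0
          refine Finset.sum_eq_zero fun j _ => ?_
          unfold lap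
          rw [Matrix.of_apply, if_pos hd, zero_mul]
        · rw [lap_mulVec]
          have hvi : v i = c T := by rw [hvU i ⟨T, hiT⟩, hgmem T i hiT]
          have hsum : ∑ j, (pmat w i j : ℂ) * v j = c T := by
            have hterm : ∀ j ∈ Finset.univ, (pmat w i j : ℂ) * v j
                = (pmat w i j : ℂ) * c T := by
              intro j _
              by_cases hw : w i j = 0
              · unfold pmat
                rw [if_neg hd, hw]
                norm_num
              · have hjT : j ∈ T.1 := by
                  by_contra hjT
                  exact hw (T.2.2 i hiT j hjT)
                rw [hvU j ⟨T, hjT⟩, hgmem T j hjT]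
            rw [Finset.sum_congr rfl hterm, ← Finset.sum_mul]
            have : ∑ j, ((pmat w i j : ℝ) : ℂ) = ((∑ j, pmat w i j : ℝ) : ℂ) := by
              push_cast; rfl
            rw [this, pmat_sum w i]
            norm_num
          rw [hvi, hsum, sub_self]
          rfl
      · have := hvN i hi
        rw [this]; rfl
    have hvker : v ∈ LinearMap.ker (Matrix.mulVecLin (lap w)) := by
      rw [LinearMap.mem_ker, Matrix.mulVecLin_apply]
      exact hker
    refine ⟨⟨v, hvker⟩, ?_⟩
    funext T
    rw [hev_apply]
    show v (sfun T) = c T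
    rw [hvU (sfun T) ⟨T, hsfun_mem T⟩, hgmem T _ (hsfun_mem T)]
  have := LinearEquiv.finrank_eq (LinearEquiv.ofBijective ev ⟨hinj, hsurj⟩)
  rw [this, Module.finrank_fintype_fun_eq_card, Nat.card_eq_fintype_card]

end Ker
section Char

variable {V : Type*} [Fintype V] [DecidableEq V] [Nonempty V]

open Polynomial Module

lemma charpoly_mulVecLin (A : Matrix V V ℂ) :
    (Matrix.mulVecLin A).charpoly = A.charpoly := by
  rw [← LinearMap.charpoly_toMatrix (Matrix.mulVecLin A) (Pi.basisFun ℂ V)]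
  congr 1
  rw [LinearMap.toMatrix_eq_toMatrix', ← Matrix.toLin'_apply', LinearMap.toMatrix'_toLin']

lemma charpoly_shift (A : Matrix V V ℂ) (μ : ℂ) :
    (Matrix.charpoly A).comp (X + C μ) = Matrix.charpoly (A - μ • 1) := by
  rw [Polynomial.comp_eq_aeval, Matrix.charpoly, Matrix.charpoly]
  rw [show (Polynomial.aeval (X + C μ)) (Matrix.charmatrix A).det
      = ((Matrix.charmatrix A).map (Polynomial.aeval (X + C μ)).toRingHom).det from
    RingHom.map_det _ _]
  congr 1
  refine Matrix.ext fun i j => ?_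
  by_cases h : i = j
  · subst h
    rw [Matrix.map_apply, Matrix.charmatrix_apply_eq, Matrix.charmatrix_apply_eq]
    have h2 : (A - μ • 1) i i = A i i - μ := by
      simp [Matrix.sub_apply, Matrix.one_apply_eq]
    rw [h2]
    simp only [AlgHom.toRingHom_eq_coe, RingHom.coe_coe, map_sub, Polynomial.aeval_X,
      Polynomial.aeval_C, Polynomial.algebraMap_eq, map_sub]
    ring
  · rw [Matrix.map_apply, Matrix.charmatrix_apply_ne _ _ _ h, Matrix.charmatrix_apply_ne _ _ _ h]
    have h2 : (A - μ • 1) i j = A i j := by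
      simp [Matrix.sub_apply, Matrix.one_apply_ne h]
    rw [h2]
    simp only [AlgHom.toRingHom_eq_coe, RingHom.coe_coe, map_neg, Polynomial.aeval_C,
      Polynomial.algebraMap_eq]

lemma maxGen_shift (A : Matrix V V ℂ) (μ : ℂ) :
    Module.End.maxGenEigenspace (Matrix.mulVecLin (A - μ • 1)) 0
      = Module.End.maxGenEigenspace (Matrix.mulVecLin A) μ := by
  have hm : Matrix.mulVecLin (A - μ • 1)
      = Matrix.mulVecLin A - μ • (1 : Module.End ℂ (V → ℂ)) := by
    apply LinearMap.ext
    intro v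
    simp [Matrix.mulVecLin_apply, Matrix.sub_mulVec, Matrix.smul_mulVec,
      Matrix.one_mulVec, Module.End.one_eq_id]
  ext x
  rw [Module.End.mem_maxGenEigenspace, Module.End.mem_maxGenEigenspace, hm]
  simp only [zero_smul, sub_zero]

lemma count_roots_charpoly (A : Matrix V V ℂ) (μ : ℂ) :
    (Matrix.charpoly A).roots.count μ
      = Module.finrank ℂ (Module.End.maxGenEigenspace (Matrix.mulVecLin A) μ) := by
  classical
  rw [Polynomial.count_roots, Polynomial.rootMultiplicity_eq_natTrailingDegree, charpoly_shift,
    ← charpoly_mulVecLin, ← LinearMap.finrank_maxGenEigenspace_zero_eq, maxGen_shift]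

lemma maxGen_one_eq (A : Matrix V V ℂ) :
    Module.End.maxGenEigenspace (Matrix.mulVecLin ((1 : Matrix V V ℂ) - A)) 1
      = Module.End.maxGenEigenspace (Matrix.mulVecLin A) 0 := by
  have h1 : Matrix.mulVecLin ((1 : Matrix V V ℂ) - A) - (1 : ℂ) • (1 : Module.End ℂ (V → ℂ))
      = -(Matrix.mulVecLin A) := by
    apply LinearMap.ext
    intro v
    simp [Matrix.mulVecLin_apply, Matrix.sub_mulVec, Matrix.one_mulVec, Module.End.one_eq_id]
  have h0 : Matrix.mulVecLin A - (0 : ℂ) • (1 : Module.End ℂ (V → ℂ)) = Matrix.mulVecLin A := by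
    simp
  have hneg : ∀ (k : ℕ) (x : V → ℂ),
      ((-(Matrix.mulVecLin A)) ^ k) x = 0 ↔ ((Matrix.mulVecLin A) ^ k) x = 0 := by
    intro k x
    have h1 : ((-1 : ℂ)) ^ k ≠ 0 := pow_ne_zero _ (by norm_num)
    rw [show -(Matrix.mulVecLin A) = (-1 : ℂ) • Matrix.mulVecLin A from (neg_one_smul ℂ _).symm,
      _root_.smul_pow, LinearMap.smul_apply, smul_eq_zero]
    simp [h1]
  ext x
  rw [Module.End.mem_maxGenEigenspace, Module.End.mem_maxGenEigenspace, ]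
  rw [h1, h0]
  exact exists_congr fun k => hneg k x

lemma maxGen_zero_eq_ker (w : V → V → ℝ) (hpos : ∀ i j, 0 ≤ w i j) :
    Module.End.maxGenEigenspace (Matrix.mulVecLin (lap w)) 0
      = LinearMap.ker (Matrix.mulVecLin (lap w)) := by
  set f := Matrix.mulVecLin (lap w) with hf
  have step : ∀ x, f (f x) = 0 → f x = 0 := by
    intro x hx
    have := lap_ker_sq w hpos x (by simpa [hf, Matrix.mulVecLin_apply] using hx)
    simpa [hf, Matrix.mulVecLin_apply] using this
  have main : ∀ (k : ℕ) (x : V → ℂ), (f ^ k) x = 0 → f x = 0 := by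
    intro k
    induction k with
    | zero =>
        intro x hx
        simp only [pow_zero, Module.End.one_apply] at hx
        rw [hx]
        exact map_zero f
    | succ n ih =>
        intro x hx
        rw [pow_succ, Module.End.mul_apply] at hx
        exact step x (ih (f x) hx)
  ext x
  rw [Module.End.mem_maxGenEigenspace, LinearMap.mem_ker]
  constructor
  · rintro ⟨k, hk⟩
    simp only [zero_smul, sub_zero] at hk
    exact main k x hk
  · intro h
    exact ⟨1, by simpa using h⟩

end Char
section Final

variable {V : Type*} [Fintype V] [DecidableEq V] [Nonempty V]

lemma isLeast_span (w : V → V → ℝ) :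
    IsLeast {m : ℕ | ∃ R : Finset V, R.card = m ∧ ∀ i, ∃ rt ∈ R, reaches w rt i}
      (Nat.card {S : Finset V // IsSCC w S ∧ IsolatedF w S}) := by
  classical
  haveI : Fintype {S : Finset V // IsSCC w S ∧ IsolatedF w S} := Fintype.ofFinite _
  set ISO := {S : Finset V // IsSCC w S ∧ IsolatedF w S} with hISO
  set sfun : ISO → V := fun T => T.2.1.1.choose with hsfun
  have hsfun_mem : ∀ T : ISO, sfun T ∈ T.1 := fun T => T.2.1.1.choose_spec
  have hsfun_inj : Function.Injective sfun := by
    intro T1 T2 h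
    apply Subtype.ext
    exact scc_unique T1.2.1 T2.2.1 (hsfun_mem T1) (h ▸ hsfun_mem T2)
  constructor
  · refine ⟨Finset.univ.image sfun, ?_, ?_⟩
    · rw [Finset.card_image_of_injective _ hsfun_inj, Finset.card_univ,
        Nat.card_eq_fintype_card]
    · intro i
      obtain ⟨S, hS, hIso, rt, hrt, hreach⟩ := exists_iso_scc_reaches w i
      refine ⟨sfun ⟨S, hS, hIso⟩, Finset.mem_image_of_mem _ (Finset.mem_univ _), ?_⟩
      have h1 : reaches w (sfun ⟨S, hS, hIso⟩) rt :=
        ((hS.2 rt hrt (sfun ⟨S, hS, hIso⟩)).1 (hsfun_mem ⟨S, hS, hIso⟩)).2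
      exact reaches_trans h1 hreach
  · rintro m ⟨R, hcard, hspan⟩
    have hpick : ∀ T : ISO, ∃ rt, rt ∈ R ∧ rt ∈ T.1 := by
      intro T
      obtain ⟨rt, hrtR, hreach⟩ := hspan (sfun T)
      exact ⟨rt, hrtR, isolated_closed T.2.2 hreach (hsfun_mem T)⟩
    choose f hfR hfT using hpick
    have hfinj : Function.Injective f := fun T1 T2 h =>
      Subtype.ext (scc_unique T1.2.1 T2.2.1 (hfT T1) (h ▸ hfT T2))
    calc Nat.card ISO = Fintype.card ISO := Nat.card_eq_fintype_card
      _ = (Finset.univ.image f).card := by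
          rw [Finset.card_image_of_injective _ hfinj, Finset.card_univ]
      _ ≤ R.card := Finset.card_le_card (by
          intro x hx
          obtain ⟨T, -, rfl⟩ := Finset.mem_image.1 hx
          exact hfR T)
      _ = m := hcard

end Final

/-- for a graph with nonnegative weights, the following are equivalent:
(i) the algebraic multiplicity of the eigenvalue `1` of `P = I - Δ` equals `k`;
(ii) the algebraic multiplicity of the eigenvalue `0` of `Δ` equals `k`;
(iii) there are exactly `k` isolated strongly connected components;
(iv) the minimum number of directed trees needed to span the graph (the minimum
cardinality of a set `R` of roots from which every vertex is reachable) equals `k`. -/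
theorem multiplicity_zero_tfae {V : Type*} [Fintype V] [DecidableEq V] [Nonempty V]
    (w : V → V → ℝ) (hloop : ∀ i, w i i = 0) (hpos : ∀ i j, 0 ≤ w i j)
    (k : ℕ) (hk : 0 < k) :
    ((((1 : Matrix V V ℂ) - lap w).charpoly.roots.count 1 = k ↔
        ((lap w).charpoly.roots.count 0 = k)) ∧
     (((lap w).charpoly.roots.count 0 = k) ↔
        {S : Finset V | IsSCC w S ∧ IsolatedF w S}.ncard = k) ∧
     (((lap w).charpoly.roots.count 0 = k) ↔
        IsLeast {m : ℕ | ∃ R : Finset V, R.card = m ∧ ∀ i, ∃ rt ∈ R, reaches w rt i} k)) := by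
  classical
  have main : ((lap w).charpoly.roots.count 0)
      = Nat.card {S : Finset V // IsSCC w S ∧ IsolatedF w S} := by
    rw [count_roots_charpoly (lap w) 0, maxGen_zero_eq_ker w hpos, finrank_ker_lap w hpos]
  have hnc : {S : Finset V | IsSCC w S ∧ IsolatedF w S}.ncard
      = Nat.card {S : Finset V // IsSCC w S ∧ IsolatedF w S} :=
    (Nat.card_coe_set_eq _).symm
  have eq1 : (((1 : Matrix V V ℂ) - lap w).charpoly.roots.count 1)
      = ((lap w).charpoly.roots.count 0) := by
    rw [count_roots_charpoly, count_roots_charpoly, maxGen_one_eq]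
  have least := isLeast_span w
  refine ⟨by rw [eq1], by rw [main, hnc], ?_⟩
  constructor
  · intro h
    rw [main] at h
    exact h ▸ least
  · intro h
    rw [main]
    exact (IsLeast.unique least h)
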